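/- Let θ > 0 and let ν be a probability measure on (Fin d → ℝ) concentrated on vectors with strictly positive coordinates. Let μ be the negative-binomial (Gamma–Poisson) compound of ν with scale θ on (Fin d → ℕ). Then for every t : Fin d → ℂ with (t j).re ≤ 0 for all j, one has ∫ exp(∑ j, t j · (x j : ℂ)) dμ(x) = ∫ ∏ j, (1 − θ·(exp(t j) − 1)) ^ (−(y j : ℂ)) dν(y), where the complex power with base b and exponent w is exp(w · log b) with log the principal branch of the complex logarithm. -/

import Mathlib

open MeasureTheory ProbabilityTheory

open scoped NNReal ENNReal

section AuxAnalysis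

open Set Complex

/-- Integrability of `x ^ (a-1) * exp (-(r*x))` on `(0, ∞)`. -/
lemma nb_integrableOn_rpow_mul_exp_neg {a r : ℝ} (ha : 0 < a) (hr : 0 < r) :
    IntegrableOn (fun x : ℝ => x ^ (a - 1) * Real.exp (-(r * x))) (Ioi 0) := by
  have h0 := Real.GammaIntegral_convergent ha
  have h1 : IntegrableOn (fun x : ℝ => Real.exp (-(r * x)) * (r * x) ^ (a - 1)) (Ioi 0) := by
    have := (integrableOn_Ioi_comp_mul_left_iff
      (fun x : ℝ => Real.exp (-x) * x ^ (a - 1)) 0 hr).mpr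
    simpa [mul_zero] using this (by simpa using h0)
  have h2 : IntegrableOn (fun x : ℝ => r ^ (1 - a) * (Real.exp (-(r * x)) * (r * x) ^ (a - 1)))
      (Ioi 0) := h1.const_mul (r ^ (1 - a))
  refine h2.congr_fun (fun x hx => ?_) measurableSet_Ioi
  rw [mem_Ioi] at hx
  have hmul : (r * x) ^ (a - 1) = r ^ (a - 1) * x ^ (a - 1) :=
    Real.mul_rpow hr.le hx.le
  have hone : r ^ (1 - a) * r ^ (a - 1) = 1 := by
    rw [← Real.rpow_add hr]; norm_num
  dsimp only
  rw [hmul]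
  calc r ^ (1 - a) * (Real.exp (-(r * x)) * (r ^ (a - 1) * x ^ (a - 1)))
      = (r ^ (1 - a) * r ^ (a - 1)) * (x ^ (a - 1) * Real.exp (-(r * x))) := by ring
    _ = x ^ (a - 1) * Real.exp (-(r * x)) := by rw [hone, one_mul]

lemma nb_norm_cpow_mul_cexp {a : ℝ} {c : ℂ} {x : ℝ} (hx : 0 < x) :
    ‖(x : ℂ) ^ ((a : ℂ) - 1) * Complex.exp (-(c * x))‖
      = x ^ (a - 1) * Real.exp (-(c.re * x)) := by
  rw [norm_mul, Complex.norm_exp,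
    Complex.norm_cpow_eq_rpow_re_of_pos hx]
  have h1 : ((a : ℂ) - 1).re = a - 1 := by simp
  have h2 : (-(c * (x : ℂ))).re = -(c.re * x) := by simp [Complex.mul_re]
  rw [h1, h2]

lemma nb_measurable_cpow_mul_cexp (a : ℝ) (c : ℂ) :
    Measurable (fun x : ℝ => (x : ℂ) ^ ((a : ℂ) - 1) * Complex.exp (-(c * x))) :=
  (Complex.measurable_ofReal.pow measurable_const).mul
    ((measurable_const.mul Complex.measurable_ofReal).neg.cexp)

lemma nb_integrableOn_cpow_mul_cexp {a : ℝ} (ha : 0 < a) {c : ℂ} (hc : 0 < c.re) :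
    IntegrableOn (fun x : ℝ => (x : ℂ) ^ ((a : ℂ) - 1) * Complex.exp (-(c * x))) (Ioi 0) := by
  refine (nb_integrableOn_rpow_mul_exp_neg ha hc).mono'
    (nb_measurable_cpow_mul_cexp a c).aestronglyMeasurable ?_
  rw [ae_restrict_iff' measurableSet_Ioi]
  refine Filter.Eventually.of_forall fun x hx => ?_
  rw [mem_Ioi] at hx
  rw [nb_norm_cpow_mul_cexp hx]

/-- The complex-rate Gamma integral, proved by analytic continuation from the real case. -/
lemma nb_integral_cpow_mul_cexp_neg_mul_Ioi {a : ℝ} (ha : 0 < a) :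
    ∀ {c : ℂ}, 0 < c.re →
    ∫ x : ℝ in Ioi 0, (x : ℂ) ^ ((a : ℂ) - 1) * Complex.exp (-(c * x))
      = Complex.Gamma a * Complex.exp (-(a : ℂ) * Complex.log c) := by
  set U : Set ℂ := {z | 0 < z.re} with hUdef
  set E : ℂ → ℂ := fun z => ∫ x : ℝ in Ioi 0, (x : ℂ) ^ ((a : ℂ) - 1) * Complex.exp (-(z * x))
    with hEdef
  set R : ℂ → ℂ := fun z => Complex.Gamma a * Complex.exp (-(a : ℂ) * Complex.log z) with hRdef
  have hUo : IsOpen U := isOpen_lt continuous_const Complex.continuous_re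
  -- E is differentiable on U
  have hEdiff : DifferentiableOn ℂ E U := by
    intro z hz
    have hz' : (0 : ℝ) < z.re := hz
    have hε : 0 < z.re / 2 := by positivity
    have key := hasDerivAt_integral_of_dominated_loc_of_deriv_le (μ := volume.restrict (Ioi 0))
      (F := fun (w : ℂ) (x : ℝ) => (x : ℂ) ^ ((a : ℂ) - 1) * Complex.exp (-(w * x)))
      (F' := fun (w : ℂ) (x : ℝ) => (x : ℂ) ^ ((a : ℂ) - 1) * (Complex.exp (-(w * x)) * (-(x : ℂ))))
      (x₀ := z) (bound := fun x : ℝ => x ^ a * Real.exp (-(z.re / 2 * x))) (Metric.ball_mem_nhds z hε)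
      (Filter.Eventually.of_forall fun w => (nb_measurable_cpow_mul_cexp a w).aestronglyMeasurable)
      (nb_integrableOn_cpow_mul_cexp ha hz')
      (((Complex.measurable_ofReal.pow measurable_const).mul
        (((measurable_const.mul Complex.measurable_ofReal).neg.cexp).mul
          Complex.measurable_ofReal.neg)).aestronglyMeasurable)
      ?_ ?_ ?_
    · exact key.2.differentiableAt.differentiableWithinAt
    · -- bound
      rw [ae_restrict_iff' measurableSet_Ioi]
      refine Filter.Eventually.of_forall fun x hx => ?_
      rw [mem_Ioi] at hx
      intro w hw
      have hwre : z.re / 2 ≤ w.re := by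
        have h1 : |(w - z).re| ≤ ‖w - z‖ := Complex.abs_re_le_norm _
        have h2 : ‖w - z‖ < z.re / 2 := by
          rw [Metric.mem_ball, Complex.dist_eq] at hw; exact hw
        have h3 := (abs_le.1 h1).1
        rw [Complex.sub_re] at h3
        linarith
      have hnorm : ‖(x : ℂ) ^ ((a : ℂ) - 1) * (Complex.exp (-(w * x)) * (-(x : ℂ)))‖
          = x ^ (a - 1) * (Real.exp (-(w.re * x)) * x) := by
        rw [norm_mul, norm_mul, norm_neg, Complex.norm_exp,
          Complex.norm_cpow_eq_rpow_re_of_pos hx, Complex.norm_real,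
          Real.norm_of_nonneg hx.le]
        have e1 : ((a : ℂ) - 1).re = a - 1 := by simp
        have e2 : (-(w * (x:ℂ))).re = -(w.re * x) := by simp [Complex.mul_re]
        rw [e1, e2]
      rw [hnorm]
      have hxa : x ^ (a - 1) * x = x ^ a := by
        rw [← Real.rpow_add_one hx.ne' (a - 1)]
        norm_num
      calc x ^ (a - 1) * (Real.exp (-(w.re * x)) * x)
          = (x ^ (a - 1) * x) * Real.exp (-(w.re * x)) := by ring
        _ = x ^ a * Real.exp (-(w.re * x)) := by rw [hxa]
        _ ≤ x ^ a * Real.exp (-(z.re / 2 * x)) := by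
            have : -(w.re * x) ≤ -(z.re / 2 * x) := by nlinarith
            exact mul_le_mul_of_nonneg_left (Real.exp_le_exp.2 this)
              (Real.rpow_nonneg hx.le a)
    · -- integrability of bound
      have := nb_integrableOn_rpow_mul_exp_neg (a := a + 1) (r := z.re / 2) (by linarith) hε
      simpa [IntegrableOn] using this
    · -- differentiability of the integrand
      refine Filter.Eventually.of_forall fun x => ?_
      intro w _
      have h1 : HasDerivAt (fun w : ℂ => -(w * (x : ℂ))) (-(x : ℂ)) w := by
        exact (hasDerivAt_mul_const (x : ℂ)).neg
      exact (h1.cexp).const_mul _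
  -- R is differentiable on U
  have hRdiff : DifferentiableOn ℂ R U := by
    intro z hz
    exact ((((Complex.differentiableAt_log (Or.inl hz)).const_mul
      (-(a : ℂ))).cexp).const_mul _).differentiableWithinAt
  -- real agreement
  have hreal : ∀ r : ℝ, 0 < r → E (r : ℂ) = R (r : ℂ) := by
    intro r hr
    have h1 : (0 : ℝ) < ((a : ℂ)).re := by simpa using ha
    have h2 := integral_cpow_mul_exp_neg_mul_Ioi (a := (a : ℂ)) h1 hr
    have hEr : E (r : ℂ) = (1 / (r : ℂ)) ^ (a : ℂ) * Complex.Gamma a := by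
      rw [hEdef]; exact h2
    rw [hEr, hRdef]
    rw [mul_comm]
    congr 1
    have hne : (1 / (r : ℂ)) ≠ 0 := by
      simp [hr.ne']
    rw [Complex.cpow_def_of_ne_zero hne]
    have h3 : (1 / (r : ℂ)) = (((1 / r : ℝ)) : ℂ) := by push_cast; ring
    have h4 : Complex.log (1 / (r : ℂ)) = ((Real.log (1 / r) : ℝ) : ℂ) := by
      rw [h3, ← Complex.ofReal_log (by positivity)]
    have h5 : Complex.log ((r : ℝ) : ℂ) = ((Real.log r : ℝ) : ℂ) := by
      rw [← Complex.ofReal_log hr.le]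
    rw [h4, h5]
    rw [one_div, Real.log_inv]
    push_cast
    ring_nf
  -- frequently equal near 1
  have hfreq : ∃ᶠ z in nhdsWithin (1 : ℂ) {(1 : ℂ)}ᶜ, E z = R z := by
    have hseq : Filter.Tendsto (fun n : ℕ => ((1 + ((n : ℝ) + 1)⁻¹ : ℝ) : ℂ)) Filter.atTop
        (nhdsWithin (1 : ℂ) {(1 : ℂ)}ᶜ) := by
      apply tendsto_nhdsWithin_of_tendsto_nhds_of_eventually_within
      · have h1 : Filter.Tendsto (fun n : ℕ => (1 + ((n : ℝ) + 1)⁻¹ : ℝ)) Filter.atTop (nhds 1) := by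
          have := tendsto_one_div_add_atTop_nhds_zero_nat (𝕜 := ℝ)
          simp only [one_div] at this
          simpa using tendsto_const_nhds.add this
        have h2 := (Complex.continuous_ofReal.tendsto 1).comp h1
        simpa [Function.comp_def] using h2
      · refine Filter.Eventually.of_forall fun n => ?_
        simp only [Set.mem_compl_iff, Set.mem_singleton_iff]
        intro h
        have h2 : (1 + ((n : ℝ) + 1)⁻¹ : ℝ) = 1 := by exact_mod_cast h
        have h3 : (0 : ℝ) < ((n : ℝ) + 1)⁻¹ := by positivity
        linarith
    refine hseq.frequently (Filter.Frequently.of_forall fun n => ?_)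
    exact hreal _ (by positivity)
  have hEq : Set.EqOn E R U :=
    (hEdiff.analyticOnNhd hUo).eqOn_of_preconnected_of_frequently_eq
      (hRdiff.analyticOnNhd hUo) ((convex_halfSpace_re_gt 0).isPreconnected)
      (show (1 : ℂ) ∈ U by simp [hUdef]) hfreq
  intro c hc
  have := hEq (show c ∈ U from hc)
  simpa [hEdef, hRdef] using this

end AuxAnalysis

section AuxDistributions

open Set Complex

/-- Laplace transform of the Gamma distribution, with `toNNReal` truncation. -/
lemma nb_gamma_laplace_nn {a θ : ℝ} (ha : 0 < a) (hθ : 0 < θ) {z : ℂ} (hz : z.re ≤ 0) :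
    ∫ v : ℝ, Complex.exp (((Real.toNNReal v : ℝ) : ℂ) * z) ∂gammaMeasure a θ⁻¹
      = Complex.exp (-(a : ℂ) * Complex.log (1 - θ * z)) := by
  have hθi : 0 < θ⁻¹ := inv_pos.mpr hθ
  have hIio : gammaMeasure a θ⁻¹ (Iio 0) = 0 := by
    rw [gammaMeasure, withDensity_apply _ measurableSet_Iio]
    exact lintegral_gammaPDF_of_nonpos le_rfl
  have hae : ∀ᵐ v ∂gammaMeasure a θ⁻¹, 0 ≤ v := by
    have hset : {v : ℝ | ¬ 0 ≤ v} = Iio 0 := by ext v; simp [not_le]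
    rw [ae_iff, hset]; exact hIio
  rw [integral_congr_ae (g := fun v : ℝ => Complex.exp ((v : ℂ) * z))
    (hae.mono fun v hv => by rw [Real.coe_toNNReal v hv])]
  have hc : (0 : ℝ) < (((θ⁻¹ : ℝ) : ℂ) - z).re := by
    simp only [Complex.sub_re, Complex.ofReal_re]
    linarith
  have hcne : ((θ⁻¹ : ℝ) : ℂ) - z ≠ 0 := by
    intro h
    rw [h] at hc
    simp at hc
  have hpdf_meas : Measurable fun v => (gammaPDFReal a θ⁻¹ v).toNNReal :=
    (measurable_gammaPDFReal a θ⁻¹).real_toNNReal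
  have h1 : gammaMeasure a θ⁻¹
      = volume.withDensity (fun v => ((gammaPDFReal a θ⁻¹ v).toNNReal : ℝ≥0∞)) := rfl
  rw [h1, integral_withDensity_eq_integral_smul hpdf_meas]
  have h2 : ∀ v : ℝ, (gammaPDFReal a θ⁻¹ v).toNNReal • Complex.exp ((v : ℂ) * z)
      = ((gammaPDFReal a θ⁻¹ v : ℝ) : ℂ) * Complex.exp ((v : ℂ) * z) := by
    intro v
    rw [NNReal.smul_def, Real.coe_toNNReal _ (gammaPDFReal_nonneg ha hθi v), Complex.real_smul]
  simp_rw [h2]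
  have h0ae : ∀ᵐ v : ℝ ∂volume, v ≠ 0 := by
    have hset : {v : ℝ | ¬ v ≠ 0} = {0} := by ext v; simp
    rw [ae_iff, hset]; exact measure_singleton 0
  have h3 : (fun v : ℝ => ((gammaPDFReal a θ⁻¹ v : ℝ) : ℂ) * Complex.exp ((v : ℂ) * z))
      =ᵐ[volume] (Ioi (0:ℝ)).indicator
        (fun v : ℝ => ((gammaPDFReal a θ⁻¹ v : ℝ) : ℂ) * Complex.exp ((v : ℂ) * z)) := by
    filter_upwards [h0ae] with v hv
    rcases lt_or_gt_of_ne hv with h | h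
    · rw [Set.indicator_of_notMem (by simp [mem_Ioi, not_lt.mpr h.le])]
      rw [gammaPDFReal, if_neg (not_le.mpr h)]
      simp
    · rw [Set.indicator_of_mem (mem_Ioi.mpr h)]
  rw [integral_congr_ae h3, integral_indicator measurableSet_Ioi]
  have h4 : ∀ v ∈ Ioi (0:ℝ), ((gammaPDFReal a θ⁻¹ v : ℝ) : ℂ) * Complex.exp ((v : ℂ) * z)
      = ((θ⁻¹ ^ a / Real.Gamma a : ℝ) : ℂ)
        * ((v : ℂ) ^ ((a : ℂ) - 1) * Complex.exp (-((((θ⁻¹ : ℝ) : ℂ) - z) * v))) := by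
    intro v hv
    rw [mem_Ioi] at hv
    rw [gammaPDFReal, if_pos hv.le]
    rw [Complex.ofReal_mul, Complex.ofReal_mul]
    have e1 : ((v ^ (a - 1) : ℝ) : ℂ) = (v : ℂ) ^ ((a : ℂ) - 1) := by
      rw [Complex.ofReal_cpow hv.le]
      push_cast
      ring_nf
    have e2 : Complex.exp (((-(θ⁻¹ * v) : ℝ)) : ℂ) * Complex.exp ((v : ℂ) * z)
        = Complex.exp (-((((θ⁻¹ : ℝ) : ℂ) - z) * v)) := by
      rw [← Complex.exp_add]
      congr 1
      push_cast
      ring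
    rw [e1, Complex.ofReal_exp, mul_assoc, mul_assoc, e2]
  rw [setIntegral_congr_fun measurableSet_Ioi h4, integral_const_mul,
    nb_integral_cpow_mul_cexp_neg_mul_Ioi ha hc]
  have hΓ : Complex.Gamma ((a : ℝ) : ℂ) = ((Real.Gamma a : ℝ) : ℂ) := Complex.Gamma_ofReal a
  have hgne : Real.Gamma a ≠ 0 := (Real.Gamma_pos_of_pos ha).ne'
  have hlog : Complex.log (1 - (θ : ℂ) * z)
      = ((Real.log θ : ℝ) : ℂ) + Complex.log (((θ⁻¹ : ℝ) : ℂ) - z) := by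
    have h5 : (1 - (θ : ℂ) * z) = (θ : ℂ) * (((θ⁻¹ : ℝ) : ℂ) - z) := by
      have hθne : (θ : ℂ) ≠ 0 := by exact_mod_cast hθ.ne'
      push_cast
      rw [mul_sub, mul_inv_cancel₀ hθne]
    rw [h5, Complex.log_ofReal_mul hθ hcne]
  rw [hlog, hΓ, mul_add, Complex.exp_add]
  have hkey : ((θ⁻¹ ^ a / Real.Gamma a : ℝ) : ℂ) * ((Real.Gamma a : ℝ) : ℂ)
      = Complex.exp (-(a : ℂ) * ((Real.log θ : ℝ) : ℂ)) := by
    have hl : ((θ⁻¹ ^ a / Real.Gamma a : ℝ) : ℂ) * ((Real.Gamma a : ℝ) : ℂ)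
        = ((θ⁻¹ ^ a : ℝ) : ℂ) := by
      rw [← Complex.ofReal_mul]
      congr 1
      field_simp
    have hr : Complex.exp (-(a : ℂ) * ((Real.log θ : ℝ) : ℂ))
        = ((Real.exp (-(a * Real.log θ)) : ℝ) : ℂ) := by
      rw [Complex.ofReal_exp]
      congr 1
      push_cast
      ring
    rw [hl, hr]
    congr 1
    rw [Real.inv_rpow hθ.le, ← Real.rpow_neg hθ.le, Real.rpow_def_of_pos hθ]
    congr 1
    ring
  rw [← hkey]
  ring

/-- Laplace transform of the Poisson distribution. -/
lemma nb_poisson_laplace (r : ℝ≥0) {t : ℂ} (ht : t.re ≤ 0) :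
    ∫ n : ℕ, Complex.exp (t * n) ∂((poissonPMF r).toMeasure)
      = Complex.exp (((r : ℝ) : ℂ) * (Complex.exp t - 1)) := by
  have hb : ∀ n : ℕ, ‖Complex.exp (t * n)‖ ≤ 1 := by
    intro n
    rw [Complex.norm_exp]
    have h1 : (t * n).re = t.re * n := by simp [Complex.mul_re]
    rw [h1]
    have h2 : t.re * (n : ℝ) ≤ 0 := mul_nonpos_of_nonpos_of_nonneg ht (Nat.cast_nonneg n)
    calc Real.exp (t.re * n) ≤ Real.exp 0 := Real.exp_le_exp.2 h2
      _ = 1 := Real.exp_zero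
  have hint : Integrable (fun n : ℕ => Complex.exp (t * n)) ((poissonPMF r).toMeasure) :=
    Integrable.mono' (integrable_const 1) (measurable_from_top).aestronglyMeasurable
      (Filter.Eventually.of_forall hb)
  rw [integral_countable' hint]
  have hsing : ∀ n : ℕ, (((poissonPMF r).toMeasure) {n}).toReal = poissonPMFReal r n := by
    intro n
    rw [PMF.toMeasure_apply_singleton _ _ (measurableSet_singleton n)]
    show (ENNReal.ofReal (poissonPMFReal r n)).toReal = _
    rw [ENNReal.toReal_ofReal poissonPMFReal_nonneg]
  calc ∑' n : ℕ, (((poissonPMF r).toMeasure) {n}).toReal • Complex.exp (t * n)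
      = ∑' n : ℕ, ((Real.exp (-(r : ℝ)) : ℝ) : ℂ)
          * (((((r : ℝ)) : ℂ) * Complex.exp t) ^ n / n.factorial) := by
        refine tsum_congr fun n => ?_
        rw [hsing, poissonPMFReal]
        rw [mul_comm t (n : ℂ), Complex.exp_nat_mul]
        rw [Complex.real_smul]
        push_cast
        rw [mul_pow]
        ring
    _ = ((Real.exp (-(r : ℝ)) : ℝ) : ℂ) * Complex.exp ((((r : ℝ)) : ℂ) * Complex.exp t) := by
        rw [tsum_mul_left]
        congr 1
        rw [Complex.exp_eq_exp_ℂ, NormedSpace.exp_eq_tsum_div]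
    _ = Complex.exp (((r : ℝ) : ℂ) * (Complex.exp t - 1)) := by
        rw [Complex.ofReal_exp, ← Complex.exp_add]
        congr 1
        push_cast
        ring

end AuxDistributions

section AuxMeasure

open Set

variable {α β : Type*} [MeasurableSpace α] [MeasurableSpace β]

/-- Any set in a countable space with measurable singletons decomposes as a sum of
singleton masses. -/
lemma nb_measure_eq_tsum_singleton [MeasurableSingletonClass β] [Countable β]
    (μ : Measure β) (s : Set β) : μ s = ∑' x : s, μ {(x : β)} := by
  conv_lhs => rw [← Set.iUnion_of_singleton_coe s]
  rw [measure_iUnion ?_ fun x => measurableSet_singleton _]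
  intro x y hxy
  exact Set.disjoint_singleton.mpr (Subtype.coe_injective.ne hxy)

/-- Bochner integral against a bind of a probability measure with a Markov kernel. -/
lemma nb_integral_bind (μ : Measure α) [IsProbabilityMeasure μ]
    {κ : α → Measure β} (hκ : Measurable κ) (hκp : ∀ a, IsProbabilityMeasure (κ a))
    {f : β → ℂ} (hf : Measurable f) (hb : ∀ b, ‖f b‖ ≤ 1) :
    ∫ b, f b ∂(μ.bind κ) = ∫ a, ∫ b, f b ∂(κ a) ∂μ := by
  set k : ProbabilityTheory.Kernel α β := ⟨κ, hκ⟩ with hk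
  haveI : ProbabilityTheory.IsMarkovKernel k := ⟨fun a => hκp a⟩
  have hbind : μ.bind κ = (μ ⊗ₘ k).map Prod.snd := by
    ext s hs
    rw [Measure.map_apply measurable_snd hs, Measure.compProd_apply (measurable_snd hs),
      Measure.bind_apply hs hκ.aemeasurable]
    rfl
  have hint : Integrable (fun p : α × β => f p.2) (μ ⊗ₘ k) :=
    Integrable.mono' (integrable_const 1) (hf.comp measurable_snd).aestronglyMeasurable
      (Filter.Eventually.of_forall fun p => hb p.2)
  rw [hbind, integral_map measurable_snd.aemeasurable hf.aestronglyMeasurable,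
    Measure.integral_compProd hint]
  rfl

/-- `Real.Gamma` composed with a positive measurable function is measurable. -/
lemma nb_measurable_gamma_comp {g : α → ℝ} (hg : Measurable g)
    (hpos : ∀ x, 0 < g x) : Measurable fun x => Real.Gamma (g x) := by
  have h : (fun x => Real.Gamma (g x))
      = fun x => ∫ v : ℝ in Ioi 0, Real.exp (-v) * v ^ (g x - 1) := by
    funext x; exact Real.Gamma_eq_integral (hpos x)
  rw [h]
  have hsm : StronglyMeasurable fun p : α × ℝ => Real.exp (-p.2) * p.2 ^ (g p.1 - 1) := by
    apply Measurable.stronglyMeasurable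
    exact (measurable_snd.neg.exp).mul
      (measurable_snd.pow ((hg.comp measurable_fst).sub measurable_const))
  exact (hsm.integral_prod_right').measurable

/-- Lebesgue integral of a product of one-variable functions over a finite product
of measures on `ℝ`. -/
lemma nb_lintegral_pi_prod : ∀ {n : ℕ} (m : Fin n → Measure ℝ), (∀ i, SigmaFinite (m i)) →
    ∀ (g : Fin n → ℝ → ℝ≥0∞), (∀ i, Measurable (g i)) →
    ∫⁻ x, ∏ i, g i (x i) ∂Measure.pi m = ∏ i, ∫⁻ v, g i v ∂(m i) := by
  intro n
  induction n with
  | zero =>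
    intro m hsf g _
    haveI := hsf
    simp only [Finset.univ_eq_empty, Finset.prod_empty]
    rw [lintegral_const, one_mul, Measure.pi_univ]
    simp
  | succ n ih =>
    intro m hsf g hg
    haveI := hsf
    have hmp := measurePreserving_piFinSuccAbove m 0
    have hmeas : Measurable fun p : ℝ × (Fin n → ℝ) =>
        g 0 p.1 * ∏ j : Fin n, g (Fin.succ j) (p.2 j) :=
      ((hg 0).comp measurable_fst).mul (Finset.measurable_prod _ fun j _ =>
        (hg _).comp ((measurable_pi_apply j).comp measurable_snd))
    calc ∫⁻ x, ∏ i, g i (x i) ∂Measure.pi m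
        = ∫⁻ p, g 0 p.1 * ∏ j : Fin n, g (Fin.succ j) (p.2 j)
            ∂((m 0).prod (Measure.pi fun j => m ((0 : Fin (n+1)).succAbove j))) := by
          rw [← hmp.lintegral_comp hmeas]
          refine lintegral_congr fun x => ?_
          rw [Fin.prod_univ_succ]
          simp [MeasurableEquiv.piFinSuccAbove, Fin.zero_succAbove, Fin.tail]
      _ = (∫⁻ v, g 0 v ∂m 0) * ∏ j : Fin n, ∫⁻ v, g (Fin.succ j) v ∂(m (Fin.succ j)) := by
          rw [lintegral_prod_mul (f := g 0)
            (g := fun q : Fin n → ℝ => ∏ j : Fin n, g (Fin.succ j) (q j))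
            ((hg 0).aemeasurable)
            ((Finset.measurable_prod _ fun j _ =>
              (hg _).comp (measurable_pi_apply j)).aemeasurable)]
          congr 1
          have := ih (fun j => m (Fin.succ j)) (fun j => hsf _)
            (fun j => g (Fin.succ j)) (fun j => hg _)
          simpa [Fin.zero_succAbove] using this
      _ = ∏ i, ∫⁻ v, g i v ∂(m i) :=
          (Fin.prod_univ_succ (fun i : Fin (n+1) => ∫⁻ v, g i v ∂(m i))).symm

/-- Bochner integral of a product of one-variable functions over a finite product measure. -/
lemma nb_integral_pi_prod {ι : Type*} [Fintype ι] {X : ι → Type*} [∀ i, MeasurableSpace (X i)]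
    (m : ∀ i, Measure (X i)) [h : ∀ i, SigmaFinite (m i)] (g : ∀ i, X i → ℂ) :
    ∫ x, ∏ i, g i (x i) ∂Measure.pi m = ∏ i, ∫ v, g i v ∂(m i) := by
  letI : ∀ i, MeasureSpace (X i) := fun i => ⟨m i⟩
  haveI : ∀ i, SigmaFinite (volume : Measure (X i)) := h
  exact MeasureTheory.integral_fintype_prod_eq_prod (μ := m) g

end AuxMeasure

section AuxKernels

open Set

/-- Truncation to positive values. -/
noncomputable def nbPhi : ℝ → ℝ := fun s => if 0 < s then s else 1

lemma nbPhi_pos (s : ℝ) : 0 < nbPhi s := by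
  unfold nbPhi
  split
  · assumption
  · norm_num

lemma nbPhi_of_pos {s : ℝ} (h : 0 < s) : nbPhi s = s := if_pos h

lemma measurable_nbPhi : Measurable nbPhi :=
  Measurable.ite (measurableSet_lt measurable_const measurable_id) measurable_id measurable_const

lemma nb_measurable_poisson_apply (n : ℕ) :
    Measurable fun v : ℝ => (poissonPMF (Real.toNNReal v)) n := by
  have h : ∀ v : ℝ, (poissonPMF (Real.toNNReal v)) n
      = ENNReal.ofReal (Real.exp (-(max v 0)) * (max v 0) ^ n / n.factorial) := by
    intro v
    show ENNReal.ofReal (poissonPMFReal (Real.toNNReal v) n) = _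
    rw [poissonPMFReal, Real.coe_toNNReal']
  simp_rw [h]
  apply Measurable.ennreal_ofReal
  have hmax : Measurable fun v : ℝ => max v 0 := measurable_id.max measurable_const
  exact ((hmax.neg.exp).mul (hmax.pow_const n)).div_const _

/-- The product Poisson kernel. -/
noncomputable def nbK (d : ℕ) (u : Fin d → ℝ) : Measure (Fin d → ℕ) :=
  Measure.pi fun j => (poissonPMF (Real.toNNReal (u j))).toMeasure

instance nbK_prob (d : ℕ) (u : Fin d → ℝ) : IsProbabilityMeasure (nbK d u) := by
  unfold nbK; infer_instance

lemma nbK_singleton (d : ℕ) (u : Fin d → ℝ) (x : Fin d → ℕ) :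
    nbK d u {x} = ∏ j, (poissonPMF (Real.toNNReal (u j))) (x j) := by
  rw [nbK, ← Set.univ_pi_singleton x, Measure.pi_pi]
  exact Finset.prod_congr rfl fun j _ =>
    PMF.toMeasure_apply_singleton _ _ (measurableSet_singleton _)

lemma measurable_nbK (d : ℕ) : Measurable (nbK d) := by
  apply Measure.measurable_of_measurable_coe
  intro s _
  have h : ∀ u, nbK d u s
      = ∑' x : s, ∏ j, (poissonPMF (Real.toNNReal (u j))) ((x : Fin d → ℕ) j) := by
    intro u
    rw [nb_measure_eq_tsum_singleton]
    exact tsum_congr fun x => nbK_singleton d u x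
  simp_rw [h]
  exact Measurable.ennreal_tsum fun x => Finset.measurable_prod _ fun j _ =>
    (nb_measurable_poisson_apply _).comp (measurable_pi_apply j)

/-- Per-coordinate negative binomial mass. -/
noncomputable def nbQ (θ s : ℝ) (n : ℕ) : ℝ≥0∞ :=
  ∫⁻ v, gammaPDF s θ⁻¹ v * (poissonPMF (Real.toNNReal v)) n ∂(volume : Measure ℝ)

lemma measurable_nbQ_phi (θ : ℝ) (n : ℕ) : Measurable fun s : ℝ => nbQ θ (nbPhi s) n := by
  have hΓ : Measurable fun s : ℝ => Real.Gamma (nbPhi s) :=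
    nb_measurable_gamma_comp measurable_nbPhi nbPhi_pos
  have hgamma : Measurable fun p : ℝ × ℝ => gammaPDF (nbPhi p.1) θ⁻¹ p.2 := by
    simp_rw [gammaPDF_eq]
    apply Measurable.ennreal_ofReal
    apply Measurable.ite (measurableSet_le measurable_const measurable_snd)
    · exact (((measurable_const.pow (measurable_nbPhi.comp measurable_fst)).div
        (hΓ.comp measurable_fst)).mul
        (measurable_snd.pow ((measurable_nbPhi.comp measurable_fst).sub measurable_const))).mul
        ((measurable_const.mul measurable_snd).neg.exp)
    · exact measurable_const
  have huncurry : Measurable (Function.uncurry fun (s v : ℝ) =>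
      gammaPDF (nbPhi s) θ⁻¹ v * (poissonPMF (Real.toNNReal v)) n) :=
    hgamma.mul ((nb_measurable_poisson_apply n).comp measurable_snd)
  exact Measurable.lintegral_prod_right huncurry

/-- The product Gamma measure. -/
noncomputable def nbGammaPi (d : ℕ) (θ : ℝ) (y : Fin d → ℝ) : Measure (Fin d → ℝ) :=
  Measure.pi fun j => gammaMeasure (y j) θ⁻¹

/-- The conditional negative binomial distribution. -/
noncomputable def nbF (d : ℕ) (θ : ℝ) (y : Fin d → ℝ) : Measure (Fin d → ℕ) :=
  (nbGammaPi d θ y).bind (nbK d)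

lemma nbF_singleton {d : ℕ} {θ : ℝ} (hθ : 0 < θ) {y : Fin d → ℝ} (hy : ∀ j, 0 < y j)
    (x : Fin d → ℕ) : nbF d θ y {x} = ∏ j, nbQ θ (y j) (x j) := by
  haveI : ∀ j, IsProbabilityMeasure (gammaMeasure (y j) θ⁻¹) :=
    fun j => isProbabilityMeasure_gammaMeasure (hy j) (inv_pos.mpr hθ)
  rw [nbF, Measure.bind_apply (measurableSet_singleton x) (measurable_nbK d).aemeasurable]
  have h1 : ∀ u, nbK d u {x} = ∏ j, (poissonPMF (Real.toNNReal (u j))) (x j) :=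
    fun u => nbK_singleton d u x
  simp_rw [h1]
  rw [nbGammaPi, nb_lintegral_pi_prod _ (fun j => inferInstance)
    (fun j v => (poissonPMF (Real.toNNReal v)) (x j))
    (fun j => nb_measurable_poisson_apply _)]
  refine Finset.prod_congr rfl fun j _ => ?_
  have hpdfm : Measurable (gammaPDF (y j) θ⁻¹) := (measurable_gammaPDFReal _ _).ennreal_ofReal
  rw [gammaMeasure, lintegral_withDensity_eq_lintegral_mul _ hpdfm
    (nb_measurable_poisson_apply _)]
  rfl

lemma nbF_univ {d : ℕ} {θ : ℝ} (hθ : 0 < θ) {y : Fin d → ℝ} (hy : ∀ j, 0 < y j) :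
    nbF d θ y Set.univ = 1 := by
  haveI : ∀ j, IsProbabilityMeasure (gammaMeasure (y j) θ⁻¹) :=
    fun j => isProbabilityMeasure_gammaMeasure (hy j) (inv_pos.mpr hθ)
  haveI : IsProbabilityMeasure (nbGammaPi d θ y) := by unfold nbGammaPi; infer_instance
  rw [nbF, Measure.bind_apply MeasurableSet.univ (measurable_nbK d).aemeasurable]
  have h1 : ∀ u, nbK d u Set.univ = 1 := fun u => measure_univ
  simp_rw [h1]
  simp

lemma measurable_nbG (d : ℕ) (θ : ℝ) (hθ : 0 < θ) :
    Measurable fun y : Fin d → ℝ => nbF d θ (fun j => nbPhi (y j)) := by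
  apply Measure.measurable_of_measurable_coe
  intro s _
  have h : ∀ y : Fin d → ℝ, nbF d θ (fun j => nbPhi (y j)) s
      = ∑' x : s, ∏ j, nbQ θ (nbPhi (y j)) ((x : Fin d → ℕ) j) := by
    intro y
    rw [nb_measure_eq_tsum_singleton]
    exact tsum_congr fun x => nbF_singleton hθ (fun j => nbPhi_pos _) _
  simp_rw [h]
  exact Measurable.ennreal_tsum fun x => Finset.measurable_prod _ fun j _ =>
    (measurable_nbQ_phi θ _).comp (measurable_pi_apply j)

end AuxKernels

/-- Negative-binomial (Gamma–Poisson) compound with scale `θ` of a measure `ν` on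
`Fin d → ℝ`: conditionally on `y ~ ν`, draw independent `u j ~ Gamma(shape = y j,
rate = θ⁻¹)`, then independent Poisson variables with rates `u j`. -/
noncomputable def negBinCompound (d : ℕ) (θ : ℝ) (ν : Measure (Fin d → ℝ)) :
    Measure (Fin d → ℕ) :=
  ν.bind (fun y => (Measure.pi fun j => gammaMeasure (y j) θ⁻¹).bind
    (fun u => Measure.pi fun j => (poissonPMF (Real.toNNReal (u j))).toMeasure))

/-- Laplace transform of a negative binomial compound: for `t` with nonpositive real
parts, `∫ e^{⟨t,x⟩} dμ(x) = ∫ ∏ⱼ (1 − θ(e^{tⱼ} − 1))^{−yⱼ} dν(y)`, where the complex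
power `b ^ w` is `exp (w * log b)` with `log` the principal branch. -/
theorem laplaceTransform_negBinCompound
    (d : ℕ) (θ : ℝ) (hθ : 0 < θ)
    (ν : Measure (Fin d → ℝ)) [IsProbabilityMeasure ν]
    (hν : ∀ᵐ y ∂ν, ∀ j, 0 < y j)
    (t : Fin d → ℂ) (ht : ∀ j, (t j).re ≤ 0) :
    ∫ x, Complex.exp (∑ j, t j * (x j : ℂ)) ∂(negBinCompound d θ ν)
      = ∫ y, ∏ j, Complex.exp ((-(y j : ℂ)) *
          Complex.log (1 - (θ : ℂ) * (Complex.exp (t j) - 1))) ∂ν := by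
  classical
  have hθi : 0 < θ⁻¹ := inv_pos.mpr hθ
  set f : (Fin d → ℕ) → ℂ := fun x => Complex.exp (∑ j, t j * (x j : ℂ)) with hfdef
  have hcast : Measurable fun n : ℕ => (n : ℂ) := measurable_from_top
  have hf_meas : Measurable f :=
    Measurable.cexp (Finset.measurable_sum Finset.univ fun j _ =>
      measurable_const.mul (hcast.comp (measurable_pi_apply j)))
  have hf_bound : ∀ x, ‖f x‖ ≤ 1 := by
    intro x
    rw [hfdef]
    simp only
    rw [Complex.norm_exp]
    have h1 : (∑ j, t j * ((x j : ℕ) : ℂ)).re = ∑ j, (t j).re * (x j : ℝ) := by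
      rw [Complex.re_sum]
      refine Finset.sum_congr rfl fun j _ => ?_
      simp [Complex.mul_re]
    rw [h1]
    have h2 : (∑ j, (t j).re * (x j : ℝ)) ≤ 0 :=
      Finset.sum_nonpos fun j _ =>
        mul_nonpos_of_nonpos_of_nonneg (ht j) (Nat.cast_nonneg _)
    calc Real.exp _ ≤ Real.exp 0 := Real.exp_le_exp.2 h2
      _ = 1 := Real.exp_zero
  set G : (Fin d → ℝ) → Measure (Fin d → ℕ) := fun y => nbF d θ (fun j => nbPhi (y j))
    with hGdef
  have hGmeas : Measurable G := measurable_nbG d θ hθ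
  have hGuniv : ∀ y, G y Set.univ = 1 := fun y => nbF_univ hθ (fun j => nbPhi_pos _)
  have hGy_eq : ∀ y : Fin d → ℝ, (∀ j, 0 < y j) → G y = nbF d θ y := by
    intro y hy
    rw [hGdef]
    exact congrArg (nbF d θ) (funext fun j => nbPhi_of_pos (hy j))
  have hFG : (fun y => nbF d θ y) =ᵐ[ν] G := by
    filter_upwards [hν] with y hy
    exact (hGy_eq y hy).symm
  have hbind : negBinCompound d θ ν = ν.bind G := by
    show ν.bind (fun y => nbF d θ y) = ν.bind G
    unfold Measure.bind
    rw [Measure.map_congr hFG]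
  haveI hprob : IsProbabilityMeasure (ν.bind G) := by
    constructor
    rw [Measure.bind_apply MeasurableSet.univ hGmeas.aemeasurable]
    have h1 : ∀ y : Fin d → ℝ, G y Set.univ = 1 := hGuniv
    simp_rw [h1]
    simp
  have hint : Integrable f (ν.bind G) :=
    Integrable.mono' (integrable_const 1) hf_meas.aestronglyMeasurable
      (Filter.Eventually.of_forall hf_bound)
  have hGx_meas : ∀ x : Fin d → ℕ, Measurable fun y => G y {x} := fun x =>
    (Measure.measurable_coe (measurableSet_singleton x)).comp hGmeas
  have hGx_le_one : ∀ (x : Fin d → ℕ) (y : Fin d → ℝ), G y {x} ≤ 1 := by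
    intro x y
    calc G y {x} ≤ G y Set.univ := measure_mono (Set.subset_univ _)
      _ = 1 := hGuniv y
  rw [hbind]
  rw [show (∫ x, Complex.exp (∑ j, t j * (x j : ℂ)) ∂(ν.bind G)) = ∫ x, f x ∂(ν.bind G) from rfl]
  rw [integral_countable' hint]
  have step1 : ∀ x : Fin d → ℕ,
      ((ν.bind G) {x}).toReal • f x = (∫ y, (G y {x}).toReal ∂ν) • f x := by
    intro x
    congr 1
    rw [Measure.bind_apply (measurableSet_singleton x) hGmeas.aemeasurable]
    rw [integral_toReal (hGx_meas x).aemeasurable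
      (Filter.Eventually.of_forall fun y =>
        lt_of_le_of_lt (hGx_le_one x y) ENNReal.one_lt_top)]
  have hb1 : ∀ (x : Fin d → ℕ) (y : Fin d → ℝ),
      (‖(G y {x}).toReal • f x‖₊ : ℝ≥0∞) ≤ G y {x} := by
    intro x y
    have h1 : (‖(G y {x}).toReal‖₊ : ℝ≥0∞) ≤ G y {x} := by
      rw [← enorm_eq_nnnorm, Real.enorm_eq_ofReal ENNReal.toReal_nonneg]
      exact ENNReal.ofReal_toReal_le
    have h2 : (‖f x‖₊ : ℝ≥0∞) ≤ 1 := by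
      rw [← ENNReal.coe_one, ENNReal.coe_le_coe, ← NNReal.coe_le_coe, coe_nnnorm,
        NNReal.coe_one]
      exact hf_bound x
    calc (‖(G y {x}).toReal • f x‖₊ : ℝ≥0∞)
        = (‖(G y {x}).toReal‖₊ : ℝ≥0∞) * (‖f x‖₊ : ℝ≥0∞) := by
          rw [nnnorm_smul, ENNReal.coe_mul]
      _ ≤ G y {x} * 1 := mul_le_mul' h1 h2
      _ = G y {x} := mul_one _
  have hb2 : ∑' x : Fin d → ℕ, ∫⁻ y, ‖(G y {x}).toReal • f x‖₊ ∂ν ≠ ⊤ := by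
    have hle : ∑' x : Fin d → ℕ, ∫⁻ y, ‖(G y {x}).toReal • f x‖₊ ∂ν ≤ 1 := by
      calc ∑' x : Fin d → ℕ, ∫⁻ y, ‖(G y {x}).toReal • f x‖₊ ∂ν
          ≤ ∑' x : Fin d → ℕ, ∫⁻ y, G y {x} ∂ν :=
            ENNReal.tsum_le_tsum fun x => lintegral_mono fun y => hb1 x y
        _ = ∫⁻ y, ∑' x : Fin d → ℕ, G y {x} ∂ν :=
            (lintegral_tsum fun x => (hGx_meas x).aemeasurable).symm
        _ = ∫⁻ y, G y Set.univ ∂ν := by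
            refine lintegral_congr fun y => ?_
            rw [nb_measure_eq_tsum_singleton (G y) Set.univ]
            exact (tsum_univ fun x => G y {x}).symm
        _ = 1 := by
            simp_rw [hGuniv]
            simp
    exact ne_top_of_le_ne_top ENNReal.one_ne_top hle
  calc ∑' x : Fin d → ℕ, ((ν.bind G) {x}).toReal • f x
      = ∑' x : Fin d → ℕ, ∫ y, (G y {x}).toReal • f x ∂ν := by
        refine tsum_congr fun x => ?_
        rw [step1 x, ← integral_smul_const]
    _ = ∫ y, ∑' x : Fin d → ℕ, (G y {x}).toReal • f x ∂ν := by
        refine (integral_tsum (fun x =>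
          (((hGx_meas x).ennreal_toReal).smul_const (f x)).aestronglyMeasurable) hb2).symm
    _ = ∫ y, ∏ j, Complex.exp ((-(y j : ℂ)) *
          Complex.log (1 - (θ : ℂ) * (Complex.exp (t j) - 1))) ∂ν := by
        refine integral_congr_ae ?_
        filter_upwards [hν] with y hy
        haveI hgm : ∀ j, IsProbabilityMeasure (gammaMeasure (y j) θ⁻¹) :=
          fun j => isProbabilityMeasure_gammaMeasure (hy j) hθi
        haveI : IsProbabilityMeasure (nbGammaPi d θ y) := by unfold nbGammaPi; infer_instance
        haveI : IsProbabilityMeasure (nbF d θ y) := ⟨nbF_univ hθ hy⟩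
        rw [hGy_eq y hy]
        have hfin : Integrable f (nbF d θ y) :=
          Integrable.mono' (integrable_const 1) hf_meas.aestronglyMeasurable
            (Filter.Eventually.of_forall hf_bound)
        simp_rw [← measureReal_def]
        rw [← integral_countable' hfin]
        rw [show nbF d θ y = (nbGammaPi d θ y).bind (nbK d) from rfl]
        rw [nb_integral_bind (nbGammaPi d θ y) (measurable_nbK d)
          (fun u => inferInstance) hf_meas hf_bound]
        have hinner : ∀ u : Fin d → ℝ, (∫ x, f x ∂(nbK d u))
            = ∏ j, Complex.exp (((Real.toNNReal (u j) : ℝ) : ℂ) * (Complex.exp (t j) - 1)) := by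
          intro u
          have h1 : ∀ x : Fin d → ℕ, f x = ∏ j, Complex.exp (t j * ((x j : ℕ) : ℂ)) := by
            intro x
            rw [hfdef]
            exact Complex.exp_sum _ _
          simp_rw [h1]
          rw [show nbK d u = Measure.pi fun j => (poissonPMF (Real.toNNReal (u j))).toMeasure
            from rfl]
          rw [nb_integral_pi_prod (fun j => (poissonPMF (Real.toNNReal (u j))).toMeasure)
            (fun j n => Complex.exp (t j * (n : ℂ)))]
          exact Finset.prod_congr rfl fun j _ => nb_poisson_laplace _ (ht j)
        simp_rw [hinner]
        rw [show nbGammaPi d θ y = Measure.pi fun j => gammaMeasure (y j) θ⁻¹ from rfl]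
        rw [nb_integral_pi_prod (fun j => gammaMeasure (y j) θ⁻¹)
          (fun j v => Complex.exp (((Real.toNNReal v : ℝ) : ℂ) * (Complex.exp (t j) - 1)))]
        refine Finset.prod_congr rfl fun j _ => ?_
        have hz : (Complex.exp (t j) - 1).re ≤ 0 := by
          have h1 : (Complex.exp (t j)).re ≤ 1 := by
            calc (Complex.exp (t j)).re ≤ ‖Complex.exp (t j)‖ :=
                Complex.re_le_norm _
              _ = Real.exp ((t j).re) := Complex.norm_exp _
              _ ≤ 1 := by
                  rw [← Real.exp_zero]
                  exact Real.exp_le_exp.2 (ht j)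
          simp only [Complex.sub_re, Complex.one_re]
          linarith
        exact nb_gamma_laplace_nn (hy j) hθ hz
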